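/- Let H be a finite group generated by e elements, p a prime, and V a simple ℤ_p[H]-module. Then there exist a finite group Ĥ generated by e elements and a surjective homomorphism π: Ĥ → H whose kernel is abelian of exponent dividing p and, as ℤ_p[H]-module via conjugation, V-homogeneous, such that for every finite group L generated by e elements and every surjective homomorphism τ: L → H whose kernel is abelian of exponent dividing p and V-homogeneous as ℤ_p[H]-module via conjugation, there exists a surjective homomorphism σ: Ĥ → L with τ ∘ σ = π. -/

import Mathlib

/-- A right action of the group `H` on the additive group `V` by additive maps,
written `v^h = ρ.act h v`. Together with a `ZMod p`-module structure on `V` this is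
exactly a right `ℤ_p[H]`-module structure. -/
structure RAction (H V : Type) [Group H] [AddCommGroup V] where
  act : H → V →+ V
  act_one : act 1 = AddMonoidHom.id V
  act_mul : ∀ g h : H, act (g * h) = (act h).comp (act g)

namespace RAction

variable {H V : Type} [Group H] [AddCommGroup V]

theorem act_act (ρ : RAction H V) (g h : H) (v : V) :
    ρ.act h (ρ.act g v) = ρ.act (g * h) v := by rw [ρ.act_mul]; rfl

theorem act_one_apply (ρ : RAction H V) (v : V) : ρ.act 1 v = v := by rw [ρ.act_one]; rfl

theorem act_smul {p : ℕ} [Module (ZMod p) V] (ρ : RAction H V) (h : H) (r : ZMod p) (v : V) :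
    ρ.act h (r • v) = r • ρ.act h v := by
  obtain ⟨k, rfl⟩ := ZMod.intCast_surjective r
  exact map_intCast_smul (ρ.act h) (ZMod p) (ZMod p) k v

/-- The diagonal right action on `V × V`. -/
def prodSelf (ρ : RAction H V) : RAction H (V × V) where
  act h := (ρ.act h).prodMap (ρ.act h)
  act_one := by ext x <;> simp [ρ.act_one]
  act_mul g h := by ext x <;> simp [ρ.act_mul]

end RAction

/-- The kernel of `π : E → H` is, via the conjugation action, a `V`-homogeneous module:
it admits an additive bijection with a finite direct sum `V^m` of copies of `V` that is
`H`-equivariant (conjugation by `g` corresponds to the action of `π g`). -/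
def IsVHomog {H V E : Type} [Group H] [AddCommGroup V] [Group E]
    (ρ : RAction H V) (π : E →* H) : Prop :=
  ∃ (m : ℕ) (φ : π.ker ≃ (Fin m → V)),
    (∀ a b : π.ker, φ (a * b) = φ a + φ b) ∧
    ∀ (g : E) (k : π.ker),
      φ ⟨g⁻¹ * (k : E) * g, by
          simpa using (MonoidHom.normal_ker π).conj_mem (k : E) k.2 g⁻¹⟩
        = fun i => ρ.act (π g) (φ k i)

/-- A finite `e`-generated extension of `H` with a `V`-homogeneous kernel. -/
structure VHomogExtension (e p : ℕ) (H V : Type) [Group H] [AddCommGroup V]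
    (ρ : RAction H V) where
  carrier : Type
  [grp : Group carrier]
  [fin : Finite carrier]
  proj : carrier →* H
  gen : ∃ f : Fin e → carrier, Subgroup.closure (Set.range f) = ⊤
  surj : Function.Surjective proj
  ker_comm : ∀ a b : proj.ker, a * b = b * a
  ker_exp : ∀ g : proj.ker, g ^ p = 1
  homog : IsVHomog ρ proj

attribute [instance] VHomogExtension.grp VHomogExtension.fin



open Subgroup Set Function
set_option linter.unusedSectionVars false
section Gaschutz
variable {G K : Type*} [Group G] [Group K] [Finite G]

lemma subgroup_card_lt {M N : Subgroup G} (h : M < N) : Nat.card M < Nat.card N := by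
  have h1 : (M : Set G) ⊂ (N : Set G) := by
    obtain ⟨hle, x, hxN, hxM⟩ := SetLike.lt_iff_le_and_exists.mp h
    exact ⟨hle, fun hsub => hxM (hsub hxN)⟩
  have e1 : Nat.card M = (M : Set G).ncard := Nat.card_coe_set_eq _
  have e2 : Nat.card N = (N : Set G).ncard := Nat.card_coe_set_eq _
  rw [e1, e2]
  exact Set.ncard_lt_ncard h1 (Set.toFinite _)

variable {e : ℕ}

/-- number of tuples with image `h` generating `M`. -/
noncomputable def Ncount (π : G →* K) (M : Subgroup G) (h : Fin e → K) : ℕ :=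
  Nat.card {x : Fin e → G // π ∘ x = h ∧ closure (range x) = M}

lemma ncount_pos_map_top {π : G →* K} {M : Subgroup G} {h : Fin e → K}
    (hh : closure (range h) = ⊤) (hpos : Ncount π M h ≠ 0) : Subgroup.map π M = ⊤ := by
  have : Nonempty {x : Fin e → G // π ∘ x = h ∧ closure (range x) = M} := by
    rcases Nat.card_pos_iff.mp (Nat.pos_of_ne_zero hpos) with ⟨hne, _⟩
    exact hne
  obtain ⟨x, hx1, hx2⟩ := this
  rw [← hx2, MonoidHom.map_closure, ← Set.range_comp, hx1, hh]

lemma card_fiber_eq {π : G →* K} {Ksub : Subgroup G} {h : Fin e → K}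
    (hlift : ∀ i, ∃ a ∈ Ksub, π a = h i) :
    Nat.card {x : Fin e → G // (∀ i, x i ∈ Ksub) ∧ π ∘ x = h}
      = (Nat.card (Ksub ⊓ π.ker : Subgroup G)) ^ e := by
  have E1 : {x : Fin e → G // (∀ i, x i ∈ Ksub) ∧ π ∘ x = h}
      ≃ ∀ i : Fin e, {a : G // a ∈ Ksub ∧ π a = h i} :=
    { toFun := fun x i => ⟨x.1 i, x.2.1 i, congrFun x.2.2 i⟩
      invFun := fun y => ⟨fun i => (y i).1, fun i => (y i).2.1, funext fun i => (y i).2.2⟩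
      left_inv := fun x => rfl
      right_inv := fun y => rfl }
  rw [Nat.card_congr E1, Nat.card_pi]
  have key : ∀ i : Fin e, Nat.card {a : G // a ∈ Ksub ∧ π a = h i}
      = Nat.card (Ksub ⊓ π.ker : Subgroup G) := by
    intro i
    obtain ⟨a₀, ha₀, ha₀π⟩ := hlift i
    refine Nat.card_congr ?_
    refine
      { toFun := fun a => ⟨a₀⁻¹ * a.1, Subgroup.mem_inf.mpr ⟨mul_mem (inv_mem ha₀) a.2.1, ?_⟩⟩
        invFun := fun c => ⟨a₀ * c.1, mul_mem ha₀ (Subgroup.mem_inf.mp c.2).1, ?_⟩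
        left_inv := fun a => by simp
        right_inv := fun c => by simp }
    · have := a.2.2
      simp [MonoidHom.mem_ker, map_mul, this, ha₀π]
    · have := (Subgroup.mem_inf.mp c.2).2
      rw [MonoidHom.mem_ker] at this
      simp [map_mul, this, ha₀π]
  rw [Finset.prod_congr rfl (fun i _ => key i), Finset.prod_const, Finset.card_univ,
    Fintype.card_fin]

noncomputable local instance : Fintype (Subgroup G) :=
  haveI : Finite (Subgroup G) := Finite.of_injective _ SetLike.coe_injective
  Fintype.ofFinite _

open scoped Classical in
lemma partition_eq (π : G →* K) (Ksub : Subgroup G) (h : Fin e → K) :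
    Nat.card {x : Fin e → G // (∀ i, x i ∈ Ksub) ∧ π ∘ x = h}
      = ∑ M ∈ Finset.univ.filter (· ≤ Ksub), Ncount π M h := by
  classical
  haveI : Fintype G := Fintype.ofFinite _
  have hA : Nat.card {x : Fin e → G // (∀ i, x i ∈ Ksub) ∧ π ∘ x = h}
      = (Finset.univ.filter (fun x : Fin e → G => (∀ i, x i ∈ Ksub) ∧ π ∘ x = h)).card := by
    rw [Nat.card_eq_fintype_card, Fintype.card_subtype]
  have hB : ∀ M : Subgroup G, Ncount π M h
      = (Finset.univ.filter (fun x : Fin e → G => π ∘ x = h ∧ closure (range x) = M)).card := by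
    intro M
    rw [Ncount, Nat.card_eq_fintype_card, Fintype.card_subtype]
  rw [hA]
  rw [Finset.card_eq_sum_card_fiberwise
    (f := fun x : Fin e → G => closure (range x))
    (t := Finset.univ.filter (· ≤ Ksub))
    (fun x hx => by
      simp only [Finset.mem_filter, Finset.mem_univ, true_and] at hx ⊢
      exact Finset.mem_coe.mpr (Finset.mem_filter.mpr ⟨Finset.mem_univ _, (closure_le _).mpr (range_subset_iff.mpr (by simpa using hx : (∀ i, x i ∈ Ksub) ∧ π ∘ x = h).1)⟩))]
  refine Finset.sum_congr rfl (fun M hM => ?_)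
  simp only [Finset.mem_filter, Finset.mem_univ, true_and] at hM
  rw [hB M]
  congr 1
  ext x
  simp only [Finset.mem_filter, Finset.mem_univ, true_and]
  constructor
  · rintro ⟨⟨h1, h2⟩, h3⟩; exact ⟨h2, h3⟩
  · rintro ⟨h2, h3⟩
    exact ⟨⟨fun i => hM (by rw [← h3]; exact subset_closure (mem_range_self i)), h2⟩, h3⟩


open scoped Classical in
lemma Ncount_indep (π : G →* K) : ∀ (n : ℕ) (Ksub : Subgroup G), Nat.card Ksub = n →
    ∀ (h h' : Fin e → K), closure (range h) = ⊤ → closure (range h') = ⊤ →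
    Ncount π Ksub h = Ncount π Ksub h' := by
  intro n
  induction n using Nat.strong_induction_on with
  | _ n ih =>
    intro Ksub hcard h h' hh hh'
    by_cases hmap : Subgroup.map π Ksub = ⊤
    · -- lifts exist
      have hlift : ∀ (g : Fin e → K) (i : Fin e), ∃ a ∈ Ksub, π a = g i := by
        intro g i
        have : g i ∈ Subgroup.map π Ksub := by rw [hmap]; trivial
        obtain ⟨a, ha, hpa⟩ := this
        exact ⟨a, ha, hpa⟩
      have key : ∀ g : Fin e → K,
          Ncount π Ksub g + ∑ M ∈ Finset.univ.filter (· < Ksub), Ncount π M g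
            = (Nat.card (Ksub ⊓ π.ker : Subgroup G)) ^ e := by
        intro g
        rw [← card_fiber_eq (hlift g), partition_eq π Ksub g]
        have hsplit : Finset.univ.filter (· ≤ Ksub)
            = insert Ksub (Finset.univ.filter (· < Ksub)) := by
          ext M
          simp only [Finset.mem_filter, Finset.mem_univ, true_and, Finset.mem_insert]
          constructor
          · intro hM
            rcases eq_or_lt_of_le hM with h1 | h1
            · exact Or.inl h1
            · exact Or.inr (by simpa using h1)
          · rintro (rfl | hM)
            · exact le_rfl
            · exact le_of_lt (by simpa using hM)
        rw [hsplit, Finset.sum_insert (by simp [lt_irrefl])]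
      have hterm : ∑ M ∈ Finset.univ.filter (· < Ksub), Ncount π M h
          = ∑ M ∈ Finset.univ.filter (· < Ksub), Ncount π M h' := by
        refine Finset.sum_congr rfl (fun M hM => ?_)
        simp only [Finset.mem_filter, Finset.mem_univ, true_and] at hM
        exact ih (Nat.card M) (hcard ▸ subgroup_card_lt hM) M rfl h h' hh hh'
      have k1 := key h
      have k2 := key h'
      rw [hterm] at k1
      omega
    · -- both sides zero
      have z : ∀ (g : Fin e → K), closure (range g) = ⊤ → Ncount π Ksub g = 0 := by
        intro g hg
        by_contra hne
        exact hmap (ncount_pos_map_top hg hne)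
      rw [z h hh, z h' hh']

theorem gaschutz (π : G →* K) (hs : Surjective π) (x₀ : Fin e → G)
    (hx₀ : closure (range x₀) = ⊤) (h : Fin e → K) (hh : closure (range h) = ⊤) :
    ∃ x : Fin e → G, closure (range x) = ⊤ ∧ π ∘ x = h := by
  have hh₀ : closure (range (π ∘ x₀)) = ⊤ := by
    rw [Set.range_comp, ← MonoidHom.map_closure, hx₀,
      ← MonoidHom.range_eq_map, MonoidHom.range_eq_top.mpr hs]
  have hpos : Ncount π ⊤ (π ∘ x₀) ≠ 0 := by
    rw [Ncount]
    exact Nat.card_ne_zero.mpr ⟨⟨⟨x₀, rfl, hx₀⟩⟩, inferInstance⟩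
  have key := Ncount_indep π (Nat.card (⊤ : Subgroup G)) ⊤ rfl h (π ∘ x₀) hh hh₀
  have hpos' : Ncount π ⊤ h ≠ 0 := by rw [key]; exact hpos
  have hne : Nonempty {x : Fin e → G // π ∘ x = h ∧ closure (range x) = ⊤} :=
    (Nat.card_ne_zero.mp hpos').1
  obtain ⟨x, h1, h2⟩ := hne
  exact ⟨x, h2, h1⟩
end Gaschutz

section Build
variable {H V M : Type} [Group H] [AddCommGroup V] [AddCommGroup M]
variable (ρ : RAction H V) (A : H → M →+ M)

/-- sup of a list of subgroups -/
def slist (l : List (AddSubgroup M)) : AddSubgroup M := l.foldr (· ⊔ ·) ⊥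

lemma le_slist : ∀ {l : List (AddSubgroup M)} {S : AddSubgroup M}, S ∈ l → S ≤ slist l := by
  intro l
  induction l with
  | nil => intro S h; cases h
  | cons T l ih =>
    intro S h
    rcases List.mem_cons.mp h with rfl | h
    · exact le_sup_left
    · exact le_trans (ih h) le_sup_right

lemma slist_le : ∀ {l : List (AddSubgroup M)} {X : AddSubgroup M}, (∀ S ∈ l, S ≤ X) → slist l ≤ X := by
  intro l
  induction l with
  | nil => intro X _; exact bot_le
  | cons T l ih =>
    intro X h
    exact sup_le (h T List.mem_cons_self) (ih fun S hS => h S (List.mem_cons_of_mem T hS))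

/-- stability of a subgroup under the action `A` -/
def Stab (W : AddSubgroup M) : Prop := ∀ (h : H) (w : M), w ∈ W → A h w ∈ W

/-- `S` is an equivariantly embedded copy of `V`. -/
def SimpleIso (S : AddSubgroup M) : Prop :=
  ∃ θ : V →+ M, Injective θ ∧ θ.range = S ∧ ∀ (h : H) (v : V), θ (ρ.act h v) = A h (θ v)

lemma stab_sup {W W' : AddSubgroup M} (hW : Stab A W) (hW' : Stab A W') : Stab A (W ⊔ W') := by
  intro h w hw
  rcases AddSubgroup.mem_sup.mp hw with ⟨a, ha, b, hb, rfl⟩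
  rw [map_add]
  exact AddSubgroup.add_mem_sup (hW h a ha) (hW' h b hb)

lemma simpleiso_dichotomy
    (hV : ∀ B : AddSubgroup V, (∀ (h : H) (v : V), v ∈ B → ρ.act h v ∈ B) → B = ⊥ ∨ B = ⊤)
    {S : AddSubgroup M} (hS : SimpleIso ρ A S) {B : AddSubgroup M} (hB : Stab A B) :
    S ⊓ B = ⊥ ∨ S ≤ B := by
  obtain ⟨θ, hinj, hrange, hequiv⟩ := hS
  have hstab : ∀ (h : H) (v : V), v ∈ AddSubgroup.comap θ B → ρ.act h v ∈ AddSubgroup.comap θ B := by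
    intro h v hv
    simp only [AddSubgroup.mem_comap] at hv ⊢
    rw [hequiv]
    exact hB h _ hv
  rcases hV _ hstab with hbot | htop
  · left
    rw [eq_bot_iff]
    intro x hx
    rcases AddSubgroup.mem_inf.mp hx with ⟨hxS, hxB⟩
    rw [← hrange] at hxS
    obtain ⟨v, rfl⟩ := hxS
    have : v ∈ AddSubgroup.comap θ B := hxB
    rw [hbot] at this
    simp only [AddSubgroup.mem_bot] at this
    simp [this]
  · right
    intro x hx
    rw [← hrange] at hx
    obtain ⟨v, rfl⟩ := hx
    have : v ∈ AddSubgroup.comap θ B := by rw [htop]; trivial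
    exact this

lemma build
    (hV : ∀ B : AddSubgroup V, (∀ (h : H) (v : V), v ∈ B → ρ.act h v ∈ B) → B = ⊥ ∨ B = ⊤) :
    ∀ (l : List (AddSubgroup M)), (∀ S ∈ l, S = ⊥ ∨ SimpleIso ρ A S) →
    ∀ (W : AddSubgroup M), Stab A W →
    ∃ (k : ℕ) (Ψ : (Fin k → V) →+ M),
      (∀ (h : H) (c : Fin k → V), Ψ (fun i => ρ.act h (c i)) = A h (Ψ c)) ∧
      W ⊔ Ψ.range = W ⊔ slist l ∧ (∀ c, Ψ c ∈ W → c = 0) := by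
  intro l
  induction l with
  | nil =>
    intro _ W hW
    refine ⟨0, 0, ?_, ?_, ?_⟩
    · intro h c; simp
    · congr 1
      ext x
      simp [AddMonoidHom.mem_range, slist, eq_comm]
    · intro c _; exact Subsingleton.elim _ _
  | cons S l ih =>
    intro hl W hW
    obtain ⟨k, Ψ, hequiv, hrange, hinj⟩ := ih (fun T hT => hl T (List.mem_cons_of_mem S hT)) W hW
    have hrangeStab : Stab A Ψ.range := by
      intro h w hw
      obtain ⟨c, rfl⟩ := hw
      rw [← hequiv]
      exact ⟨_, rfl⟩
    rcases hl S List.mem_cons_self with rfl | hSiso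
    · refine ⟨k, Ψ, hequiv, ?_, hinj⟩
      rw [hrange]
      show W ⊔ slist l = W ⊔ (⊥ ⊔ slist l)
      rw [bot_sup_eq]
    · have hU : Stab A (W ⊔ Ψ.range) := stab_sup A hW hrangeStab
      rcases simpleiso_dichotomy ρ A hV hSiso hU with hbot | hle
      · -- extend by a new copy of V
        obtain ⟨θ, hθinj, hθrange, hθequiv⟩ := hSiso
        set initHom : (Fin (k+1) → V) →+ (Fin k → V) :=
          AddMonoidHom.mk' (fun c i => c i.castSucc) (fun a b => rfl) with hinitHom
        set Ψ' : (Fin (k+1) → V) →+ M :=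
          (θ.comp (Pi.evalAddMonoidHom (fun _ : Fin (k+1) => V) (Fin.last k))) + (Ψ.comp initHom)
          with hΨ'
        have hΨ'apply : ∀ c : Fin (k+1) → V,
            Ψ' c = θ (c (Fin.last k)) + Ψ (fun i => c i.castSucc) := fun c => rfl
        have hr : Ψ'.range = S ⊔ Ψ.range := by
          apply le_antisymm
          · rintro x ⟨c, rfl⟩
            rw [hΨ'apply]
            exact AddSubgroup.add_mem _
              (AddSubgroup.mem_sup_left (by rw [← hθrange]; exact ⟨_, rfl⟩))
              (AddSubgroup.mem_sup_right ⟨_, rfl⟩)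
          · apply sup_le
            · rw [← hθrange]
              rintro x ⟨v, rfl⟩
              refine ⟨Fin.snoc 0 v, ?_⟩
              rw [hΨ'apply]
              have hz : (fun i : Fin k => (Fin.snoc (0 : Fin k → V) v : Fin (k+1) → V) i.castSucc) = 0 := by
                funext i; simp
              rw [hz, map_zero, add_zero, Fin.snoc_last]
            · rintro x ⟨d, rfl⟩
              refine ⟨Fin.snoc d 0, ?_⟩
              rw [hΨ'apply]
              have hz : (fun i : Fin k => (Fin.snoc d (0 : V) : Fin (k+1) → V) i.castSucc) = d := by
                funext i; simp
              rw [hz, Fin.snoc_last, map_zero, zero_add]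
        refine ⟨k + 1, Ψ', ?_, ?_, ?_⟩
        · intro h c
          show θ (ρ.act h (c (Fin.last k))) + Ψ (fun i => ρ.act h (c i.castSucc))
              = A h (θ (c (Fin.last k)) + Ψ fun i => c i.castSucc)
          rw [hθequiv, hequiv, map_add]
        · calc W ⊔ Ψ'.range = S ⊔ (W ⊔ Ψ.range) := by rw [hr, sup_left_comm]
            _ = S ⊔ (W ⊔ slist l) := by rw [hrange]
            _ = W ⊔ (S ⊔ slist l) := by rw [sup_left_comm]
            _ = W ⊔ slist (S :: l) := rfl
        · intro c hc
          rw [hΨ'apply] at hc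
          have hlast : θ (c (Fin.last k)) = 0 := by
            have hmem : θ (c (Fin.last k)) ∈ S ⊓ (W ⊔ Ψ.range) := by
              constructor
              · rw [← hθrange]; exact ⟨_, rfl⟩
              · have heq : θ (c (Fin.last k)) = (θ (c (Fin.last k)) + Ψ (fun i => c i.castSucc))
                    + (- Ψ (fun i => c i.castSucc)) := by abel
                rw [heq]
                exact AddSubgroup.add_mem _ (AddSubgroup.mem_sup_left hc)
                  (AddSubgroup.mem_sup_right (AddSubgroup.neg_mem _ ⟨_, rfl⟩))
            rw [hbot] at hmem
            exact hmem
          have hlast0 : c (Fin.last k) = 0 := by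
            apply hθinj
            rw [hlast, map_zero]
          have hinit : Ψ (fun i => c i.castSucc) ∈ W := by
            rwa [hlast, zero_add] at hc
          have h0 : (fun i : Fin k => c i.castSucc) = 0 := hinj _ hinit
          funext i
          induction i using Fin.lastCases with
          | last => exact hlast0
          | cast j => exact congrFun h0 j
      · -- S already inside
        refine ⟨k, Ψ, hequiv, ?_, hinj⟩
        show W ⊔ Ψ.range = W ⊔ (S ⊔ slist l)
        apply le_antisymm
        · rw [hrange]
          exact sup_le le_sup_left (le_sup_right.trans le_sup_right)
        · exact sup_le le_sup_left (sup_le hle (le_sup_right.trans hrange.ge))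

end Build

section HomogTop
variable {p : ℕ} {H V : Type} [Group H] [AddCommGroup V] [Module (ZMod p) V]

lemma simple_addsubgroup (hp : p.Prime) (ρ : RAction H V)
    (hsimple : ∀ W : Submodule (ZMod p) V, (∀ h : H, ∀ w ∈ W, ρ.act h w ∈ W) → W = ⊥ ∨ W = ⊤) :
    ∀ B : AddSubgroup V, (∀ (h : H) (v : V), v ∈ B → ρ.act h v ∈ B) → B = ⊥ ∨ B = ⊤ := by
  intro B hB
  haveI : NeZero p := ⟨hp.ne_zero⟩
  let B' : Submodule (ZMod p) V :=
    { carrier := B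
      add_mem' := fun ha hb => B.add_mem ha hb
      zero_mem' := B.zero_mem
      smul_mem' := by
        intro r v hv
        have h2 : (r.val : ZMod p) = r := ZMod.natCast_rightInverse r
        have h1 : (r.val : ZMod p) • v = r.val • v := Nat.cast_smul_eq_nsmul _ _ _
        show r • v ∈ B
        rw [← h2, h1]
        exact AddSubgroup.nsmul_mem B hv r.val }
  rcases hsimple B' (fun h w hw => hB h w hw) with h | h
  · left
    rw [eq_bot_iff]
    intro x hx
    have : x ∈ B' := hx
    rw [h] at this
    simpa using this
  · right
    rw [eq_top_iff]
    intro x _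
    have : x ∈ (⊤ : Submodule (ZMod p) V) := trivial
    rw [← h] at this
    exact this

theorem homog_subgroup (ρ : RAction H V)
    (hV : ∀ B : AddSubgroup V, (∀ (h : H) (v : V), v ∈ B → ρ.act h v ∈ B) → B = ⊥ ∨ B = ⊤)
    {n : ℕ} (W : AddSubgroup (Fin n → V))
    (hst : ∀ (h : H) (w : Fin n → V), w ∈ W → (fun i => ρ.act h (w i)) ∈ W) :
    ∃ (k : ℕ) (ψ : W ≃ (Fin k → V)),
      (∀ a b : W, ψ (a + b) = ψ a + ψ b) ∧
      ∀ (h : H) (w : W), ψ ⟨fun i => ρ.act h (w.1 i), hst h w.1 w.2⟩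
        = fun i => ρ.act h (ψ w i) := by
  classical
  set A : H → (Fin n → V) →+ (Fin n → V) :=
    fun h => AddMonoidHom.mk' (fun w i => ρ.act h (w i))
      (fun a b => by funext i; exact map_add _ _ _) with hA
  have hstW : Stab A W := fun h w hw => hst h w hw
  set axisHom : Fin n → (V →+ (Fin n → V)) :=
    fun i => AddMonoidHom.single (fun _ : Fin n => V) i with haxis
  have haxeq : ∀ (i : Fin n) (h : H) (v : V), axisHom i (ρ.act h v) = A h (axisHom i v) := by
    intro i h v
    funext j
    exact (Pi.apply_single (fun _ => ρ.act h) (fun _ => map_zero _) i v j).symm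
  set laxes : List (AddSubgroup (Fin n → V)) :=
    (List.finRange n).map (fun i => (axisHom i).range) with hlaxes
  have hax : ∀ S ∈ laxes, S = ⊥ ∨ SimpleIso ρ A S := by
    intro S hS
    rw [hlaxes, List.mem_map] at hS
    obtain ⟨i, _, rfl⟩ := hS
    refine Or.inr ⟨axisHom i, ?_, rfl, haxeq i⟩
    intro a b hab
    have := congrFun hab i
    simpa [haxis] using this
  have htop : slist laxes = ⊤ := by
    rw [eq_top_iff]
    intro x _
    have hx : x = ∑ i : Fin n, Pi.single i (x i) := (Finset.univ_sum_single x).symm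
    rw [hx]
    refine AddSubgroup.sum_mem _ (fun i _ => ?_)
    exact le_slist (List.mem_map_of_mem (List.mem_finRange i)) ⟨x i, rfl⟩
  obtain ⟨k₁, Ψ₁, hEq₁, hRan₁, hInj₁⟩ := build ρ A hV laxes hax W hstW
  have hsup : W ⊔ Ψ₁.range = ⊤ := by rw [hRan₁, htop, sup_top_eq]
  set F0 : W × (Fin k₁ → V) → (Fin n → V) := fun z => z.1.1 + Ψ₁ z.2 with hF0
  have hFinj : Injective F0 := by
    rintro ⟨w, c⟩ ⟨w', c'⟩ hww
    simp only [hF0] at hww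
    have hsub : Ψ₁ (c - c') = w'.1 - w.1 := by
      rw [map_sub]
      have := hww
      abel_nf
      abel_nf at this
      linear_combination (norm := abel_nf) this  -- fallback
    have hc : c - c' = 0 := hInj₁ _ (by rw [hsub]; exact AddSubgroup.sub_mem _ w'.2 w.2)
    have hcc : c = c' := by rwa [sub_eq_zero] at hc
    subst hcc
    have hw : w.1 = w'.1 := by
      have := hww
      exact add_right_cancel this
    exact Prod.ext (Subtype.ext hw) rfl
  have hFsurj : Surjective F0 := by
    intro x
    have : x ∈ W ⊔ Ψ₁.range := by rw [hsup]; trivial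
    rcases AddSubgroup.mem_sup.mp this with ⟨a, ha, b, hb, hab⟩
    obtain ⟨c, rfl⟩ := hb
    exact ⟨(⟨a, ha⟩, c), hab⟩
  set E := Equiv.ofBijective F0 ⟨hFinj, hFsurj⟩ with hE
  set eW : (Fin n → V) → (Fin n → V) := fun x => ((E.symm x).1 : Fin n → V) with heWdef
  have hEsymm : ∀ (w : W) (c : Fin k₁ → V), E.symm (w.1 + Ψ₁ c) = (w, c) := by
    intro w c
    apply E.injective
    rw [Equiv.apply_symm_apply]
    rfl
  have heW : ∀ (w : W) (c : Fin k₁ → V), eW (w.1 + Ψ₁ c) = w.1 := by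
    intro w c
    rw [heWdef]
    simp only [hEsymm]
  have hmemW : ∀ x, eW x ∈ W := fun x => (E.symm x).1.2
  have hdecomp : ∀ x, x = eW x + Ψ₁ (E.symm x).2 := by
    intro x
    have := E.apply_symm_apply x
    rw [hE] at this
    exact this.symm
  have heWadd : ∀ x y, eW (x + y) = eW x + eW y := by
    intro x y
    have h1 : x + y = ((⟨eW x, hmemW x⟩ : W) + ⟨eW y, hmemW y⟩).1
        + Ψ₁ ((E.symm x).2 + (E.symm y).2) := by
      rw [map_add]
      show x + y = (eW x + eW y) + _
      conv_lhs => rw [hdecomp x, hdecomp y]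
      abel
    rw [h1, heW]
    rfl
  have heWfix : ∀ x ∈ W, eW x = x := by
    intro x hx
    have h2 : eW ((⟨x, hx⟩ : W).1 + Ψ₁ 0) = x := heW _ 0
    rwa [map_zero, add_zero] at h2
  have heWeq : ∀ (h : H) (x : Fin n → V), eW (A h x) = A h (eW x) := by
    intro h x
    have h1 : A h x = (⟨A h (eW x), hstW h _ (hmemW x)⟩ : W).1
        + Ψ₁ (fun i => ρ.act h ((E.symm x).2 i)) := by
      rw [hEq₁]
      show A h x = A h (eW x) + A h (Ψ₁ (E.symm x).2)
      rw [← map_add]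
      congr 1
      exact hdecomp x
    rw [h1, heW]
  set eWh : (Fin n → V) →+ (Fin n → V) := AddMonoidHom.mk' eW heWadd with heWh
  set lT : List (AddSubgroup (Fin n → V)) :=
    (List.finRange n).map (fun i => (eWh.comp (axisHom i)).range) with hlT
  have hθeq : ∀ (i : Fin n) (h : H) (v : V),
      (eWh.comp (axisHom i)) (ρ.act h v) = A h ((eWh.comp (axisHom i)) v) := by
    intro i h v
    show eW (axisHom i (ρ.act h v)) = A h (eW (axisHom i v))
    rw [haxeq, heWeq]
  have hlTsimp : ∀ S ∈ lT, S = ⊥ ∨ SimpleIso ρ A S := by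
    intro S hS
    rw [hlT, List.mem_map] at hS
    obtain ⟨i, _, rfl⟩ := hS
    set θ' := eWh.comp (axisHom i) with hθ'
    have hBstab : ∀ (h : H) (v : V), v ∈ AddSubgroup.comap θ' ⊥ →
        ρ.act h v ∈ AddSubgroup.comap θ' ⊥ := by
      intro h v hv
      simp only [AddSubgroup.mem_comap, AddSubgroup.mem_bot] at hv ⊢
      rw [hθeq, hv, map_zero]
    rcases hV _ hBstab with hbot | htop'
    · right
      refine ⟨θ', ?_, rfl, hθeq i⟩
      intro a b hab
      have : a - b ∈ AddSubgroup.comap θ' ⊥ := by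
        simp only [AddSubgroup.mem_comap, AddSubgroup.mem_bot, map_sub, hab, sub_self]
      rw [hbot] at this
      simpa [sub_eq_zero] using this
    · left
      rw [eq_bot_iff]
      rintro x ⟨v, rfl⟩
      have : v ∈ AddSubgroup.comap θ' ⊥ := by rw [htop']; trivial
      simpa using this
  have hlTW : slist lT = W := by
    apply le_antisymm
    · refine slist_le (fun S hS => ?_)
      rw [hlT, List.mem_map] at hS
      obtain ⟨i, _, rfl⟩ := hS
      rintro x ⟨v, rfl⟩
      exact hmemW _
    · intro w hw
      have h1 : w = ∑ i : Fin n, eWh (Pi.single i (w i)) := by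
        rw [← map_sum]
        rw [Finset.univ_sum_single]
        exact (heWfix w hw).symm
      rw [h1]
      refine AddSubgroup.sum_mem _ (fun i _ => ?_)
      exact le_slist (List.mem_map_of_mem (List.mem_finRange i)) ⟨w i, rfl⟩
  obtain ⟨k, Ψ₂, hEq₂, hRan₂, hInj₂⟩ := build ρ A hV lT hlTsimp ⊥ (fun h w hw => by
    simp only [AddSubgroup.mem_bot] at hw ⊢; rw [hw, map_zero])
  rw [bot_sup_eq, bot_sup_eq, hlTW] at hRan₂
  have hΨ₂inj : Injective Ψ₂ := by
    intro a b hab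
    have h0 : Ψ₂ (a - b) ∈ (⊥ : AddSubgroup (Fin n → V)) := by
      simp only [map_sub, hab, sub_self, AddSubgroup.mem_bot]
    have := hInj₂ _ h0
    rwa [sub_eq_zero] at this
  set G0 : (Fin k → V) → W := fun c => ⟨Ψ₂ c, by rw [← hRan₂]; exact ⟨c, rfl⟩⟩ with hG0
  have hGinj : Injective G0 := fun a b hab => hΨ₂inj (congrArg Subtype.val hab)
  have hGsurj : Surjective G0 := by
    intro w
    have : w.1 ∈ Ψ₂.range := by rw [hRan₂]; exact w.2
    obtain ⟨c, hc⟩ := this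
    exact ⟨c, Subtype.ext hc⟩
  set EG := Equiv.ofBijective G0 ⟨hGinj, hGsurj⟩ with hEG
  have happ : ∀ w : W, Ψ₂ (EG.symm w) = w.1 := by
    intro w
    have := EG.apply_symm_apply w
    rw [hEG] at this
    exact congrArg Subtype.val this
  refine ⟨k, EG.symm, ?_, ?_⟩
  · intro a b
    apply EG.injective
    rw [Equiv.apply_symm_apply]
    apply Subtype.ext
    show (a + b).1 = Ψ₂ (EG.symm a + EG.symm b)
    rw [map_add, happ, happ]
    rfl
  · intro h w
    apply EG.injective
    rw [Equiv.apply_symm_apply]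
    apply Subtype.ext
    show (fun i => ρ.act h (w.1 i)) = Ψ₂ (fun i => ρ.act h (EG.symm w i))
    rw [hEq₂, happ]
    rfl
end HomogTop

/-- An elementary-abelian-kernel extension of a finite group by an `e`-generated group is bounded. -/
lemma card_bound {E H : Type} [Group E] [Group H] [Finite E] (p e : ℕ) (hp : p.Prime)
    (π : E →* H) (hsurj : Surjective π)
    (hcomm : ∀ a b : π.ker, a * b = b * a) (hexp : ∀ g : π.ker, g ^ p = 1)
    (hgen : ∃ f : Fin e → E, Subgroup.closure (Set.range f) = ⊤) :
    Nat.card E ≤ Nat.card H * p ^ (Nat.card H * e) := by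
  classical
  haveI : Finite H := Finite.of_surjective π hsurj
  haveI : NeZero p := ⟨hp.ne_zero⟩
  obtain ⟨f, hf⟩ := hgen
  -- generating finset
  set S : Finset E := Finset.univ.image f with hS
  have hSclos : Subgroup.closure (S : Set E) = ⊤ := by
    rw [hS]
    rw [Finset.coe_image, Finset.coe_univ, Set.image_univ]
    exact hf
  have hScard : S.card ≤ e := by
    calc S.card ≤ (Finset.univ : Finset (Fin e)).card := Finset.card_image_le
      _ = e := by simp
  -- index of the kernel
  have hindex : π.ker.index = Nat.card H := by
    rw [Subgroup.index_ker, MonoidHom.range_eq_top.mpr hsurj]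
    simpa using Nat.card_congr (Subgroup.topEquiv (G := H)).toEquiv
  -- Schreier
  obtain ⟨T, hTcard, hTgen⟩ := Subgroup.exists_finset_card_le_mul π.ker hSclos
  have hTcard' : T.card ≤ Nat.card H * e := by
    calc T.card ≤ π.ker.index * S.card := hTcard
      _ ≤ Nat.card H * e := by rw [hindex]; exact Nat.mul_le_mul_left _ hScard
  -- the kernel is an elementary abelian p-group
  letI : CommGroup π.ker := { (inferInstance : Group π.ker) with mul_comm := hcomm }
  letI : Module (ZMod p) (Additive π.ker) := AddCommGroup.zmodModule (by
    intro x
    show p • x = 0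
    rw [← ofMul_toMul x, ← ofMul_pow]
    rw [hexp]
    rfl)
  -- a surjection from (T → ZMod p) onto the kernel
  set g : {t // t ∈ T} → Additive π.ker := fun t => Additive.ofMul t.1 with hg
  set Φ : ({t // t ∈ T} → ZMod p) →+ Additive π.ker :=
    AddMonoidHom.mk' (fun c => ∑ t : {t // t ∈ T}, c t • g t) (by
      intro a b
      show (∑ t : {t // t ∈ T}, (a + b) t • g t)
          = (∑ t : {t // t ∈ T}, a t • g t) + ∑ t : {t // t ∈ T}, b t • g t
      rw [← Finset.sum_add_distrib]
      refine Finset.sum_congr rfl (fun t _ => ?_)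
      show (a t + b t) • g t = _
      rw [add_smul]) with hΦ
  have hΦmem : ∀ t : π.ker, t ∈ T → Additive.ofMul t ∈ Φ.range := by
    intro t ht
    refine ⟨fun s => if s = ⟨t, ht⟩ then (1 : ZMod p) else 0, ?_⟩
    show (∑ s : {t // t ∈ T}, (if s = ⟨t, ht⟩ then (1 : ZMod p) else 0) • g s) = _
    rw [Finset.sum_eq_single_of_mem (⟨t, ht⟩ : {t // t ∈ T}) (Finset.mem_univ _)]
    · rw [if_pos rfl, one_smul]
    · intro s _ hs
      rw [if_neg hs, zero_smul]
  have hΦsurj : Surjective Φ := by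
    intro z
    have htop : Subgroup.toAddSubgroup.symm Φ.range = (⊤ : Subgroup π.ker) := by
      rw [eq_top_iff, ← hTgen]
      rw [Subgroup.closure_le]
      intro t ht
      exact hΦmem t ht
    have : Additive.toMul z ∈ Subgroup.toAddSubgroup.symm Φ.range := by rw [htop]; trivial
    exact this
  have hcardfun : Nat.card ({t // t ∈ T} → ZMod p) = p ^ T.card := by
    rw [Nat.card_eq_fintype_card, Fintype.card_fun]
    congr 1
    · exact (Nat.card_eq_fintype_card (α := ZMod p)).symm.trans (Nat.card_zmod p)
    · exact Fintype.card_coe T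
  have hker_le : Nat.card π.ker ≤ p ^ (Nat.card H * e) := by
    have h1 : Nat.card π.ker = Nat.card (Additive π.ker) := rfl
    calc Nat.card π.ker = Nat.card (Additive π.ker) := h1
      _ ≤ Nat.card ({t // t ∈ T} → ZMod p) := Nat.card_le_card_of_surjective Φ hΦsurj
      _ = p ^ T.card := hcardfun
      _ ≤ p ^ (Nat.card H * e) := Nat.pow_le_pow_right hp.pos hTcard'
  calc Nat.card E = Nat.card (E ⧸ π.ker) * Nat.card π.ker :=
        Subgroup.card_eq_card_quotient_mul_card_subgroup π.ker
    _ = Nat.card H * Nat.card π.ker := by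
        rw [Nat.card_congr (QuotientGroup.quotientKerEquivOfSurjective π hsurj).toEquiv]
    _ ≤ Nat.card H * p ^ (Nat.card H * e) := Nat.mul_le_mul_left _ hker_le


/-- **Existence of the `(V,e)`-cover.** For a finite `e`-generated group `H` and a simple
`ℤ_p[H]`-module `V` there is a finite `e`-generated extension `Ĥ → H` with
`V`-homogeneous kernel through which every finite `e`-generated extension of `H` with
`V`-homogeneous kernel factors. -/
theorem stmt_19 (e p : ℕ) (he : 0 < e) (hp : p.Prime) (H V : Type) [Group H] [Finite H]
    [AddCommGroup V] [Module (ZMod p) V] (ρ : RAction H V)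
    (hH : ∃ f : Fin e → H, Subgroup.closure (Set.range f) = ⊤)
    (hsimple : (∃ v : V, v ≠ 0) ∧
      ∀ W : Submodule (ZMod p) V, (∀ h : H, ∀ w ∈ W, ρ.act h w ∈ W) → W = ⊥ ∨ W = ⊤) :
    ∃ C : VHomogExtension e p H V ρ,
      ∀ (L : Type) [Group L] [Finite L] (τ : L →* H),
        (∃ f : Fin e → L, Subgroup.closure (Set.range f) = ⊤) →
        Function.Surjective τ →
        (∀ a b : τ.ker, a * b = b * a) →
        (∀ k : τ.ker, k ^ p = 1) →
        IsVHomog ρ τ →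
        ∃ σ : C.carrier →* L, Function.Surjective σ ∧ τ.comp σ = C.proj := by
  classical
  obtain ⟨hVne, hsimp2⟩ := hsimple
  have hVdich := simple_addsubgroup hp ρ hsimp2
  -- the trivial extension, showing the collection is nonempty
  let C₀ : VHomogExtension e p H V ρ :=
  { carrier := H
    proj := MonoidHom.id H
    gen := hH
    surj := fun h => ⟨h, rfl⟩
    ker_comm := by
      intro a b
      apply Subtype.ext
      show (a : H) * b = (b : H) * a
      have ha : (a : H) = 1 := MonoidHom.mem_ker.mp a.2
      have hb : (b : H) = 1 := MonoidHom.mem_ker.mp b.2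
      rw [ha, hb]
    ker_exp := by
      intro g
      apply Subtype.ext
      show ((g ^ p : (MonoidHom.id H).ker) : H) = 1
      have hg : (g : H) = 1 := MonoidHom.mem_ker.mp g.2
      rw [SubgroupClass.coe_pow, hg, one_pow]
    homog := by
      refine ⟨0, ⟨fun _ => (fun i => i.elim0), fun _ => 1, ?_, ?_⟩, ?_, ?_⟩
      · intro a
        have ha : (a : H) = 1 := MonoidHom.mem_ker.mp a.2
        exact Subtype.ext ha.symm
      · intro c; funext i; exact i.elim0
      · intro a b; funext i; exact i.elim0
      · intro g k; funext i; exact i.elim0 }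
  -- pick an extension of maximal cardinality
  have hbdd : BddAbove (Set.range (fun C : VHomogExtension e p H V ρ => Nat.card C.carrier)) := by
    refine ⟨Nat.card H * p ^ (Nat.card H * e), ?_⟩
    rintro n ⟨C, rfl⟩
    exact card_bound p e hp C.proj C.surj C.ker_comm C.ker_exp C.gen
  have hne : (Set.range (fun C : VHomogExtension e p H V ρ => Nat.card C.carrier)).Nonempty :=
    ⟨_, C₀, rfl⟩
  obtain ⟨C, hC⟩ := Nat.sSup_mem hne hbdd
  have hmax : ∀ C' : VHomogExtension e p H V ρ,
      Nat.card C'.carrier ≤ Nat.card C.carrier := by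
    intro C'
    calc Nat.card C'.carrier
        ≤ sSup (Set.range fun C : VHomogExtension e p H V ρ => Nat.card C.carrier) :=
          le_csSup hbdd ⟨C', rfl⟩
      _ = Nat.card C.carrier := hC.symm
  refine ⟨C, ?_⟩
  intro L _ _ τ hLgen hτ hLcomm hLexp hLhom
  obtain ⟨x, hx⟩ := C.gen
  have hxH : closure (range (C.proj ∘ x)) = ⊤ := by
    rw [Set.range_comp, ← MonoidHom.map_closure, hx, ← MonoidHom.range_eq_map,
      MonoidHom.range_eq_top.mpr C.surj]
  obtain ⟨f0, hf0⟩ := hLgen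
  obtain ⟨y, hy, hyτ⟩ := gaschutz τ hτ f0 hf0 (C.proj ∘ x) hxH
  -- the fiber product subgroup
  let gens : Fin e → C.carrier × L := fun i => (x i, y i)
  let D : Subgroup (C.carrier × L) := closure (range gens)
  have hfiber : ∀ z ∈ D, C.proj z.1 = τ z.2 := by
    intro z hz
    refine closure_induction (p := fun z _ => C.proj z.1 = τ z.2) ?_ ?_ ?_ ?_ hz
    · rintro _ ⟨i, rfl⟩
      exact (congrFun hyτ i).symm
    · simp
    · intro a b _ _ ha hb
      show C.proj (a.1 * b.1) = τ (a.2 * b.2)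
      rw [map_mul, map_mul, ha, hb]
    · intro a _ ha
      show C.proj a.1⁻¹ = τ a.2⁻¹
      rw [map_inv, map_inv, ha]
  let fstD : ↥D →* C.carrier := (MonoidHom.fst _ _).comp D.subtype
  let sndD : ↥D →* L := (MonoidHom.snd _ _).comp D.subtype
  let πD : ↥D →* H := C.proj.comp fstD
  have hfst_surj : Surjective fstD := by
    intro c
    have h1 : Subgroup.map (MonoidHom.fst _ _) D = ⊤ := by
      show Subgroup.map (MonoidHom.fst _ _) (closure (range gens)) = ⊤
      rw [MonoidHom.map_closure]
      have h2 : (MonoidHom.fst C.carrier L) '' (range gens) = range x := by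
        ext t
        constructor
        · rintro ⟨_, ⟨i, rfl⟩, rfl⟩; exact ⟨i, rfl⟩
        · rintro ⟨i, rfl⟩; exact ⟨gens i, ⟨i, rfl⟩, rfl⟩
      rw [h2, hx]
    have : c ∈ Subgroup.map (MonoidHom.fst _ _) D := by rw [h1]; trivial
    obtain ⟨z, hzD, hz⟩ := this
    exact ⟨⟨z, hzD⟩, hz⟩
  have hsnd_surj : Surjective sndD := by
    intro l
    have h1 : Subgroup.map (MonoidHom.snd _ _) D = ⊤ := by
      show Subgroup.map (MonoidHom.snd _ _) (closure (range gens)) = ⊤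
      rw [MonoidHom.map_closure]
      have h2 : (MonoidHom.snd C.carrier L) '' (range gens) = range y := by
        ext t
        constructor
        · rintro ⟨_, ⟨i, rfl⟩, rfl⟩; exact ⟨i, rfl⟩
        · rintro ⟨i, rfl⟩; exact ⟨gens i, ⟨i, rfl⟩, rfl⟩
      rw [h2, hy]
    have : l ∈ Subgroup.map (MonoidHom.snd _ _) D := by rw [h1]; trivial
    obtain ⟨z, hzD, hz⟩ := this
    exact ⟨⟨z, hzD⟩, hz⟩
  have hπD_surj : Surjective πD := by
    intro h
    obtain ⟨c, hc⟩ := C.surj h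
    obtain ⟨d, hd⟩ := hfst_surj c
    exact ⟨d, by show C.proj (fstD d) = h; rw [hd, hc]⟩
  have hker1 : ∀ d : ↥D, d ∈ πD.ker → (d : C.carrier × L).1 ∈ C.proj.ker := by
    intro d hd
    exact MonoidHom.mem_ker.mpr (MonoidHom.mem_ker.mp hd)
  have hker2 : ∀ d : ↥D, d ∈ πD.ker → (d : C.carrier × L).2 ∈ τ.ker := by
    intro d hd
    apply MonoidHom.mem_ker.mpr
    rw [← hfiber d.1 d.2]
    exact MonoidHom.mem_ker.mp (hker1 d hd)
  have hDgen : ∃ f : Fin e → ↥D, closure (range f) = ⊤ := by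
    refine ⟨fun i => ⟨gens i, subset_closure (mem_range_self i)⟩, ?_⟩
    have hpre : range (fun i => (⟨gens i, subset_closure (mem_range_self i)⟩ : ↥D))
        = D.subtype ⁻¹' (range gens) := by
      ext d
      constructor
      · rintro ⟨i, rfl⟩; exact ⟨i, rfl⟩
      · rintro ⟨i, hi⟩; exact ⟨i, Subtype.ext hi⟩
    rw [hpre]
    exact Subgroup.closure_preimage_eq_top (range gens)
  have hDcomm : ∀ a b : πD.ker, a * b = b * a := by
    intro a b
    apply Subtype.ext
    apply Subtype.ext
    apply Prod.ext
    · exact congrArg Subtype.val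
        (C.ker_comm ⟨_, hker1 a.1 a.2⟩ ⟨_, hker1 b.1 b.2⟩)
    · exact congrArg Subtype.val
        (hLcomm ⟨_, hker2 a.1 a.2⟩ ⟨_, hker2 b.1 b.2⟩)
  have hDexp : ∀ g : πD.ker, g ^ p = 1 := by
    intro g
    apply Subtype.ext
    apply Subtype.ext
    have hcoe : (((g ^ p : πD.ker) : ↥D) : C.carrier × L)
        = (((g : ↥D) : C.carrier × L)) ^ p := by norm_cast
    rw [hcoe]
    apply Prod.ext
    · show ((g : ↥D) : C.carrier × L).1 ^ p = 1
      have h3 := congrArg Subtype.val (C.ker_exp ⟨_, hker1 g.1 g.2⟩)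
      rw [SubgroupClass.coe_pow] at h3
      exact h3
    · show ((g : ↥D) : C.carrier × L).2 ^ p = 1
      have h3 := congrArg Subtype.val (hLexp ⟨_, hker2 g.1 g.2⟩)
      rw [SubgroupClass.coe_pow] at h3
      exact h3
  -- homogeneity of the kernel of `πD`
  obtain ⟨m1, φ₁, hφ₁add, hφ₁eq⟩ := C.homog
  obtain ⟨m2, φ₂, hφ₂add, hφ₂eq⟩ := hLhom
  have happend_add : ∀ (u u' : Fin m1 → V) (v v' : Fin m2 → V),
      Fin.append (u + u') (v + v') = Fin.append u v + Fin.append u' v' := by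
    intro u u' v v'
    funext i
    induction i using Fin.addCases with
    | left j => simp [Fin.append_left]
    | right j => simp [Fin.append_right]
  have happend_act : ∀ (h : H) (u : Fin m1 → V) (v : Fin m2 → V),
      Fin.append (fun i => ρ.act h (u i)) (fun i => ρ.act h (v i))
        = fun i => ρ.act h (Fin.append u v i) := by
    intro h u v
    funext i
    induction i using Fin.addCases with
    | left j => simp [Fin.append_left]
    | right j => simp [Fin.append_right]
  let Θ : ↥πD.ker → (Fin (m1 + m2) → V) := fun d =>
    Fin.append (φ₁ ⟨(d : ↥D).1.1, hker1 d.1 d.2⟩) (φ₂ ⟨(d : ↥D).1.2, hker2 d.1 d.2⟩)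
  have hΘadd : ∀ a b : πD.ker, Θ (a * b) = Θ a + Θ b := by
    intro a b
    show Fin.append (φ₁ _) (φ₂ _) = _
    have h1 : (⟨((a * b : πD.ker) : ↥D).1.1, hker1 _ (a*b).2⟩ : C.proj.ker)
        = ⟨(a : ↥D).1.1, hker1 a.1 a.2⟩ * ⟨(b : ↥D).1.1, hker1 b.1 b.2⟩ := Subtype.ext rfl
    have h2 : (⟨((a * b : πD.ker) : ↥D).1.2, hker2 _ (a*b).2⟩ : τ.ker)
        = ⟨(a : ↥D).1.2, hker2 a.1 a.2⟩ * ⟨(b : ↥D).1.2, hker2 b.1 b.2⟩ := Subtype.ext rfl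
    rw [h1, h2, hφ₁add, hφ₂add]
    exact happend_add _ _ _ _
  have hΘzero : Θ 1 = 0 := by
    have h1 := hΘadd 1 1
    rw [mul_one] at h1
    exact (left_eq_add.mp h1)
  have hΘneg : ∀ a : πD.ker, Θ a⁻¹ = - Θ a := by
    intro a
    have h1 := hΘadd a⁻¹ a
    rw [inv_mul_cancel, hΘzero] at h1
    exact eq_neg_of_add_eq_zero_left h1.symm
  have hΘinj : Injective Θ := by
    intro a b hab
    have h1 : ∀ j : Fin m1, φ₁ ⟨(a : ↥D).1.1, hker1 a.1 a.2⟩ j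
        = φ₁ ⟨(b : ↥D).1.1, hker1 b.1 b.2⟩ j := by
      intro j
      have := congrFun hab (Fin.castAdd m2 j)
      simpa [Θ, Fin.append_left] using this
    have h2 : ∀ j : Fin m2, φ₂ ⟨(a : ↥D).1.2, hker2 a.1 a.2⟩ j
        = φ₂ ⟨(b : ↥D).1.2, hker2 b.1 b.2⟩ j := by
      intro j
      have := congrFun hab (Fin.natAdd m1 j)
      simpa [Θ, Fin.append_right] using this
    have e1 := φ₁.injective (funext h1)
    have e2 := φ₂.injective (funext h2)
    apply Subtype.ext
    apply Subtype.ext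
    exact Prod.ext (congrArg Subtype.val e1) (congrArg Subtype.val e2)
  have hΘconj : ∀ (g : ↥D) (d : πD.ker) (pf : g⁻¹ * (d : ↥D) * g ∈ πD.ker),
      Θ ⟨g⁻¹ * (d : ↥D) * g, pf⟩ = fun i => ρ.act (πD g) (Θ d i) := by
    intro g d pf
    show Fin.append (φ₁ _) (φ₂ _) = _
    have c1 : (⟨((⟨g⁻¹ * (d : ↥D) * g, pf⟩ : πD.ker) : ↥D).1.1, hker1 _ pf⟩ : C.proj.ker)
        = ⟨((g : C.carrier × L).1)⁻¹ * ((d : ↥D) : C.carrier × L).1 * (g : C.carrier × L).1,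
            by simpa using (MonoidHom.normal_ker C.proj).conj_mem _ (hker1 d.1 d.2) ((g : C.carrier × L).1)⁻¹⟩ := Subtype.ext rfl
    have c2 : (⟨((⟨g⁻¹ * (d : ↥D) * g, pf⟩ : πD.ker) : ↥D).1.2, hker2 _ pf⟩ : τ.ker)
        = ⟨((g : C.carrier × L).2)⁻¹ * ((d : ↥D) : C.carrier × L).2 * (g : C.carrier × L).2,
            by simpa using (MonoidHom.normal_ker τ).conj_mem _ (hker2 d.1 d.2) ((g : C.carrier × L).2)⁻¹⟩ := Subtype.ext rfl
    rw [c1, c2]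
    have e1 := hφ₁eq (g : C.carrier × L).1 ⟨((d : ↥D) : C.carrier × L).1, hker1 d.1 d.2⟩
    have e2 := hφ₂eq (g : C.carrier × L).2 ⟨((d : ↥D) : C.carrier × L).2, hker2 d.1 d.2⟩
    have hτg : τ (g : C.carrier × L).2 = πD g := (hfiber g.1 g.2).symm
    have hCg : C.proj (g : C.carrier × L).1 = πD g := rfl
    rw [show (⟨((g : C.carrier × L).1)⁻¹ * ((d : ↥D) : C.carrier × L).1 * (g : C.carrier × L).1, _⟩ : C.proj.ker) = _ from Subtype.ext rfl] at e1
    rw [e1, e2, hτg, hCg]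
    exact happend_act _ _ _
  let W : AddSubgroup (Fin (m1 + m2) → V) :=
  { carrier := Set.range Θ
    zero_mem' := ⟨1, hΘzero⟩
    add_mem' := by rintro _ _ ⟨a, rfl⟩ ⟨b, rfl⟩; exact ⟨a * b, hΘadd a b⟩
    neg_mem' := by rintro _ ⟨a, rfl⟩; exact ⟨a⁻¹, hΘneg a⟩ }
  have hstW : ∀ (h : H) (w : Fin (m1 + m2) → V), w ∈ W → (fun i => ρ.act h (w i)) ∈ W := by
    rintro h _ ⟨d, rfl⟩
    obtain ⟨g, hg⟩ := hπD_surj h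
    have pf : g⁻¹ * (d : ↥D) * g ∈ πD.ker := by
      have : πD (g⁻¹ * (d : ↥D) * g) = 1 := by
        rw [map_mul, map_mul, map_inv, MonoidHom.mem_ker.mp d.2, hg]
        group
      exact MonoidHom.mem_ker.mpr this
    refine ⟨⟨g⁻¹ * (d : ↥D) * g, pf⟩, ?_⟩
    rw [hΘconj g d pf, hg]
  obtain ⟨k, ψ, hψadd, hψeq⟩ := homog_subgroup ρ hVdich W hstW
  let ΘW : ↥πD.ker → ↥W := fun d => ⟨Θ d, ⟨d, rfl⟩⟩
  have hΘWbij : Bijective ΘW := by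
    constructor
    · intro a b hab
      exact hΘinj (congrArg Subtype.val hab)
    · rintro ⟨_, d, rfl⟩
      exact ⟨d, rfl⟩
  let φD : ↥πD.ker ≃ (Fin k → V) := (Equiv.ofBijective ΘW hΘWbij).trans ψ
  have hφDadd : ∀ a b : πD.ker, φD (a * b) = φD a + φD b := by
    intro a b
    show ψ (ΘW (a * b)) = ψ (ΘW a) + ψ (ΘW b)
    rw [show ΘW (a * b) = ΘW a + ΘW b from Subtype.ext (hΘadd a b)]
    exact hψadd _ _
  have hφDeq : ∀ (g : ↥D) (d : πD.ker) (pf : g⁻¹ * (d : ↥D) * g ∈ πD.ker),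
      φD ⟨g⁻¹ * (d : ↥D) * g, pf⟩ = fun i => ρ.act (πD g) (φD d i) := by
    intro g d pf
    show ψ (ΘW ⟨g⁻¹ * (d : ↥D) * g, pf⟩) = _
    rw [show ΘW ⟨g⁻¹ * (d : ↥D) * g, pf⟩
        = ⟨fun i => ρ.act (πD g) (Θ d i), hstW (πD g) _ ⟨d, rfl⟩⟩
        from Subtype.ext (hΘconj g d pf)]
    have := hψeq (πD g) (ΘW d)
    rw [show (⟨fun i => ρ.act (πD g) (Θ d i), hstW (πD g) _ ⟨d, rfl⟩⟩ : ↥W)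
        = ⟨fun i => ρ.act (πD g) ((ΘW d).1 i), hstW (πD g) (ΘW d).1 (ΘW d).2⟩
        from Subtype.ext rfl]
    exact this
  let CD : VHomogExtension e p H V ρ :=
  { carrier := ↥D
    proj := πD
    gen := hDgen
    surj := hπD_surj
    ker_comm := hDcomm
    ker_exp := hDexp
    homog := ⟨k, φD, hφDadd, fun g d => hφDeq g d _⟩ }
  -- maximality forces the first projection to be an isomorphism
  have hcard : Nat.card ↥D = Nat.card C.carrier * Nat.card fstD.ker := by
    rw [Subgroup.card_eq_card_quotient_mul_card_subgroup fstD.ker]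
    congr 1
    exact Nat.card_congr (QuotientGroup.quotientKerEquivOfSurjective fstD hfst_surj).toEquiv
  have hle : Nat.card ↥D ≤ Nat.card C.carrier := hmax CD
  have hCpos : 0 < Nat.card C.carrier := Nat.card_pos
  have hker_one : Nat.card fstD.ker = 1 := by
    have h1 : Nat.card C.carrier * Nat.card fstD.ker ≤ Nat.card C.carrier * 1 := by
      rw [mul_one, ← hcard]
      exact hle
    have h2 : Nat.card fstD.ker ≤ 1 := Nat.le_of_mul_le_mul_left h1 hCpos
    have h3 : 0 < Nat.card fstD.ker := Nat.card_pos
    omega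
  have hinj : Injective fstD :=
    (MonoidHom.ker_eq_bot_iff fstD).mp (Subgroup.card_eq_one.mp hker_one)
  let eD : ↥D ≃* C.carrier := MulEquiv.ofBijective fstD ⟨hinj, hfst_surj⟩
  refine ⟨sndD.comp eD.symm.toMonoidHom, ?_, ?_⟩
  · intro l
    obtain ⟨d, hd⟩ := hsnd_surj l
    refine ⟨eD d, ?_⟩
    show sndD (eD.symm (eD d)) = l
    rw [MulEquiv.symm_apply_apply, hd]
  · ext c
    show τ (sndD (eD.symm c)) = C.proj c
    have h1 : C.proj ((eD.symm c) : C.carrier × L).1 = τ ((eD.symm c) : C.carrier × L).2 :=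
      hfiber _ (eD.symm c).2
    have h2 : fstD (eD.symm c) = c := eD.apply_symm_apply c
    exact h1.symm.trans (congrArg C.proj h2)
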